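/- For the nonlinear autonomous saddle in Moser normal form ξ̇ = F'(ξη)ξ, η̇ = -F'(ξη)η, the Lagrangian descriptor satisfies M_p((ξ_0,η_0),0,τ) = 2(|ξ_0|^p + |η_0|^p) · |F'(ξ_0η_0)|^p/(p·F'(ξ_0η_0)) · sinh(p·F'(ξ_0η_0)·τ), provided F'(ξ_0η_0) ≠ 0. -/

import Mathlib

open Real intervalIntegral

lemma int_exp_mul (c τ : ℝ) (hc : c ≠ 0) :
    ∫ t in (-τ)..τ, Real.exp (c * t) = 2 * Real.sinh (c * τ) / c := by
  rw [intervalIntegral.integral_comp_mul_left (fun x => Real.exp x) hc, integral_exp,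
    Real.sinh_eq]
  rw [smul_eq_mul]
  field_simp

/-- For the nonlinear autonomous saddle in Moser normal form, with `F' = F'(ξ₀η₀) ≠ 0`,
the Lagrangian descriptor satisfies
`M_p((ξ₀,η₀),0,τ) = 2(|ξ₀|^p + |η₀|^p) · |F'|^p/(p·F') · sinh(p·F'·τ)`. -/
theorem Mp_moser_normal_form (F : ℝ → ℝ) (p τ ξ₀ η₀ : ℝ)
    (hF : Differentiable ℝ F) (hp0 : 0 < p) (hp1 : p ≤ 1) (hτ : 0 < τ)
    (hF' : deriv F (ξ₀ * η₀) ≠ 0) :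
    ∫ t in (-τ)..τ,
        (|ξ₀ * Real.exp (deriv F (ξ₀ * η₀) * t) * deriv F (ξ₀ * η₀)| ^ p +
         |η₀ * Real.exp (-(deriv F (ξ₀ * η₀) * t)) * deriv F (ξ₀ * η₀)| ^ p)
      = 2 * (|ξ₀| ^ p + |η₀| ^ p) * (|deriv F (ξ₀ * η₀)| ^ p / (p * deriv F (ξ₀ * η₀))) *
          Real.sinh (p * deriv F (ξ₀ * η₀) * τ) := by
  set c := deriv F (ξ₀ * η₀) with hc
  have hpc : p * c ≠ 0 := mul_ne_zero hp0.ne' hF'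
  have key : ∀ t : ℝ,
      |ξ₀ * Real.exp (c * t) * c| ^ p + |η₀ * Real.exp (-(c * t)) * c| ^ p
        = (|ξ₀| ^ p * |c| ^ p) * Real.exp ((p * c) * t)
          + (|η₀| ^ p * |c| ^ p) * Real.exp (-(p * c) * t) := by
    intro t
    rw [abs_mul, abs_mul, abs_mul, abs_mul, Real.abs_exp, Real.abs_exp]
    rw [Real.mul_rpow (by positivity) (abs_nonneg c),
        Real.mul_rpow (abs_nonneg ξ₀) (Real.exp_nonneg _),
        Real.mul_rpow (by positivity) (abs_nonneg c),
        Real.mul_rpow (abs_nonneg η₀) (Real.exp_nonneg _),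
        ← Real.exp_mul, ← Real.exp_mul]
    ring_nf
  rw [intervalIntegral.integral_congr (fun t _ => key t)]
  have i1 : IntervalIntegrable (fun t => (|ξ₀| ^ p * |c| ^ p) * Real.exp ((p * c) * t))
      MeasureTheory.volume (-τ) τ := (Continuous.intervalIntegrable (by continuity) _ _)
  have i2 : IntervalIntegrable (fun t => (|η₀| ^ p * |c| ^ p) * Real.exp (-(p * c) * t))
      MeasureTheory.volume (-τ) τ := (Continuous.intervalIntegrable (by continuity) _ _)
  rw [intervalIntegral.integral_add i1 i2, intervalIntegral.integral_const_mul,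
    intervalIntegral.integral_const_mul, int_exp_mul _ _ hpc, int_exp_mul _ _ (neg_ne_zero.mpr hpc)]
  have : Real.sinh (-(p * c) * τ) = -Real.sinh (p * c * τ) := by
    rw [neg_mul, Real.sinh_neg]
  rw [this]
  field_simp
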